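/- If an affine plane of order q exists (i.e., a (q²,q,1)-design) and s is a positive integer, then there exists an (sq², sq, 1)-covering with exactly q² + q blocks; in particular C(sq², sq) ≤ q² + q. -/

import Mathlib

open Finset

lemma sum_countP_aux {α β : Type*} [DecidableEq β] (m : Multiset α) (P : Finset β)
    (pred : β → α → Prop) [∀ p a, Decidable (pred p a)] :
    ∑ p ∈ P, m.countP (pred p) =
      (m.map (fun a => (P.filter (fun p => pred p a)).card)).sum := by
  induction m using Multiset.induction with
  | empty => simp
  | cons a m ih =>
    simp only [Multiset.countP_cons, Multiset.map_cons, Multiset.sum_cons,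
      Finset.sum_add_distrib, ih]
    rw [add_comm]
    congr 1
    rw [Finset.card_filter]

lemma card_design (q : ℕ) (hq : 2 ≤ q) (𝓐 : Multiset (Finset (Fin (q ^ 2))))
    (hAblocks : ∀ b ∈ 𝓐, b.card = q)
    (hAdes : ∀ u w : Fin (q ^ 2), u ≠ w → 𝓐.countP (fun b => u ∈ b ∧ w ∈ b) = 1) :
    Multiset.card 𝓐 = q ^ 2 + q := by
  have h1 : ∑ p ∈ (Finset.univ : Finset (Fin (q ^ 2))).offDiag,
      𝓐.countP (fun b => p.1 ∈ b ∧ p.2 ∈ b) = q ^ 2 * q ^ 2 - q ^ 2 := by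
    rw [Finset.sum_congr rfl (fun p hp => hAdes p.1 p.2 (Finset.mem_offDiag.1 hp).2.2)]
    simp [Finset.offDiag_card]
  rw [sum_countP_aux] at h1
  have h2 : ∀ b ∈ 𝓐,
      ((Finset.univ : Finset (Fin (q ^ 2))).offDiag.filter
        (fun p => p.1 ∈ b ∧ p.2 ∈ b)).card = q * q - q := by
    intro b hb
    have : ((Finset.univ : Finset (Fin (q ^ 2))).offDiag.filter
        (fun p => p.1 ∈ b ∧ p.2 ∈ b)) = b.offDiag := by
      ext p
      simp [Finset.mem_offDiag, and_comm, and_left_comm]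
    rw [this, Finset.offDiag_card, hAblocks b hb]
  have h3 : (𝓐.map (fun b => ((Finset.univ : Finset (Fin (q ^ 2))).offDiag.filter
      (fun p => p.1 ∈ b ∧ p.2 ∈ b)).card)).sum = Multiset.card 𝓐 * (q * q - q) := by
    rw [Multiset.map_congr rfl h2]
    simp [Multiset.map_const', Multiset.sum_replicate]
  rw [h3] at h1
  have hpos : 0 < q * q - q := by
    have : q < q * q := by nlinarith
    omega
  have hkey : (q ^ 2 + q) * (q * q - q) = q ^ 2 * q ^ 2 - q ^ 2 := by
    have h4 : q ≤ q * q := Nat.le_mul_of_pos_left q (by omega)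
    have h5 : q ^ 2 ≤ q ^ 2 * q ^ 2 := Nat.le_mul_of_pos_left _ (by positivity)
    zify [h4, h5]
    ring
  exact Nat.eq_of_mul_eq_mul_right hpos (by rw [h1, hkey])

theorem stmt_16 (q s : ℕ) (hq : 0 < q) (hs : 0 < s)
    (𝓐 : Multiset (Finset (Fin (q ^ 2))))
    (hAblocks : ∀ b ∈ 𝓐, b.card = q)
    (hAdes : ∀ u w : Fin (q ^ 2), u ≠ w → 𝓐.countP (fun b => u ∈ b ∧ w ∈ b) = 1) :
    ∃ 𝓑 : Multiset (Finset (Fin (s * q ^ 2))),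
      (∀ b ∈ 𝓑, b.card = s * q) ∧
      (∀ u w : Fin (s * q ^ 2), u ≠ w → 1 ≤ 𝓑.countP (fun b => u ∈ b ∧ w ∈ b)) ∧
      Multiset.card 𝓑 = q ^ 2 + q := by
  rcases eq_or_lt_of_le (show 1 ≤ q from hq) with hq1 | hq2
  · -- q = 1
    subst hq1
    refine ⟨{Finset.univ, Finset.univ}, ?_, ?_, ?_⟩
    · intro b hb
      simp only [Multiset.insert_eq_cons, Multiset.mem_cons, Multiset.mem_singleton] at hb
      rcases hb with rfl | rfl <;> simp
    · intro u w _
      simp [Multiset.countP_cons]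
    · simp
  · -- q ≥ 2
    have hq2 : 2 ≤ q := hq2
    -- product equiv
    let e : Fin s × Fin (q ^ 2) ≃ Fin (s * q ^ 2) := finProdFinEquiv
    let g : Fin (s * q ^ 2) → Fin (q ^ 2) := fun x => (e.symm x).2
    refine ⟨𝓐.map (fun A => ((Finset.univ : Finset (Fin s)) ×ˢ A).map e.toEmbedding),
      ?_, ?_, ?_⟩
    · intro b hb
      rcases Multiset.mem_map.1 hb with ⟨A, hA, rfl⟩
      rw [Finset.card_map, Finset.card_product, Finset.card_univ, Fintype.card_fin,
        hAblocks A hA]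
    · intro u w huw
      have hmem : ∀ (A : Finset (Fin (q ^ 2))) (x : Fin (s * q ^ 2)),
          x ∈ ((Finset.univ : Finset (Fin s)) ×ˢ A).map e.toEmbedding ↔ g x ∈ A := by
        intro A x
        rw [Finset.mem_map_equiv]
        simp [Finset.mem_product, g]
      have hcount : (𝓐.map (fun A => ((Finset.univ : Finset (Fin s)) ×ˢ A).map
            e.toEmbedding)).countP (fun b => u ∈ b ∧ w ∈ b)
          = 𝓐.countP (fun A => g u ∈ A ∧ g w ∈ A) := by
        rw [Multiset.countP_map]
        rw [Multiset.countP_eq_card_filter]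
        congr 1
        apply Multiset.filter_congr
        intro A _
        simp [hmem, g]
      rw [hcount]
      by_cases hgw : g u = g w
      · -- need a block containing g u
        have : ∃ w' : Fin (q ^ 2), w' ≠ g u := by
          apply Fintype.exists_ne_of_one_lt_card
          simp only [Fintype.card_fin]
          nlinarith
        rcases this with ⟨w', hw'⟩
        have h1 : 𝓐.countP (fun A => g u ∈ A ∧ w' ∈ A) = 1 :=
          hAdes _ _ (Ne.symm hw')
        have h2 : 0 < 𝓐.countP (fun A => g u ∈ A ∧ w' ∈ A) := by omega
        rcases Multiset.countP_pos.1 h2 with ⟨A, hA, hgu, _⟩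
        exact Multiset.countP_pos.2 ⟨A, hA, hgu, hgw ▸ hgu⟩
      · rw [hAdes _ _ hgw]
    · rw [Multiset.card_map]
      exact card_design q hq2 𝓐 hAblocks hAdes
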